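/- Base case of Lemma 3.8: let k be prime, R = (ℤ/kℤ)[T]/(T^k-1), p = T^{k-1}+...+1. If a ∈ R, u ∈ ℤ/kℤ is a unit, and c, c' are units of ℤ/kℤ with a·(c·p) = (c'·p)·u in R, then a is a unit of R. -/

import Mathlib

open Polynomial

/-- The group ring `R = (ℤ/kℤ)[T]/(T^k - 1)`. -/
abbrev GroupRingR (k : ℕ) : Type :=
  Polynomial (ZMod k) ⧸ Ideal.span {(X : Polynomial (ZMod k)) ^ k - 1}

noncomputable def Tgen (k : ℕ) : GroupRingR k :=
  Ideal.Quotient.mk _ (X : Polynomial (ZMod k))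

noncomputable def pT (k : ℕ) : GroupRingR k := ∑ i ∈ Finset.range k, (Tgen k) ^ i

/-- Base case of Lemma 3.8: if `a·(c·p) = (c'·p)·u` in `R` with `u, c, c'` units of
`ℤ/kℤ` and `k` prime, then `a` is a unit of `R`. -/
theorem stmt_8 (k : ℕ) (hk : Nat.Prime k) (a : GroupRingR k) (u c c' : (ZMod k)ˣ)
    (h : a * (algebraMap (ZMod k) (GroupRingR k) (c : ZMod k) * pT k) =
      (algebraMap (ZMod k) (GroupRingR k) (c' : ZMod k) * pT k) *
        algebraMap (ZMod k) (GroupRingR k) (u : ZMod k)) :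
    IsUnit a := by
  haveI : Fact k.Prime := ⟨hk⟩
  set I : Ideal (Polynomial (ZMod k)) := Ideal.span {(X : Polynomial (ZMod k)) ^ k - 1}
  have hk1 : 1 ≤ k := hk.one_lt.le
  -- key polynomial identity
  have hfrob : ((X : Polynomial (ZMod k)) - 1) ^ k = X ^ k - 1 := by
    have := sub_pow_char (x := (X : Polynomial (ZMod k))) (y := 1) (p := k)
    simpa using this
  have hXne : ((X : Polynomial (ZMod k)) - 1) ≠ 0 := by
    have := X_sub_C_ne_zero (1 : ZMod k)
    simpa using this
  have hgeom : (∑ i ∈ Finset.range k, (X : Polynomial (ZMod k)) ^ i)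
      = ((X : Polynomial (ZMod k)) - 1) ^ (k - 1) := by
    apply mul_right_cancel₀ hXne
    rw [geom_sum_mul, ← hfrob]
    rw [← pow_succ, Nat.sub_add_cancel hk1]
  -- algebra map description
  have halg : ∀ x : ZMod k, algebraMap (ZMod k) (GroupRingR k) x
      = Ideal.Quotient.mk I (C x) := fun x => rfl
  have hpT : pT k = Ideal.Quotient.mk I (∑ i ∈ Finset.range k, (X : Polynomial (ZMod k)) ^ i) := by
    simp [pT, Tgen, map_sum, map_pow]; rfl
  obtain ⟨f, rfl⟩ := Ideal.Quotient.mk_surjective (I := I) a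
  have hmem : (f * C (c : ZMod k) - C ((c' : ZMod k) * (u : ZMod k)))
      * (∑ i ∈ Finset.range k, (X : Polynomial (ZMod k)) ^ i) ∈ I := by
    rw [← Ideal.Quotient.eq_zero_iff_mem]
    rw [map_mul, map_sub, map_mul, map_mul, ← hpT]
    rw [sub_mul]
    rw [sub_eq_zero, ← C_mul]
    calc Ideal.Quotient.mk I f * Ideal.Quotient.mk I (C (c : ZMod k)) * pT k
        = Ideal.Quotient.mk I f * (algebraMap (ZMod k) (GroupRingR k) (c : ZMod k) * pT k) := by
          rw [halg]; ring
      _ = (algebraMap (ZMod k) (GroupRingR k) (c' : ZMod k) * pT k) *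
            algebraMap (ZMod k) (GroupRingR k) (u : ZMod k) := h
      _ = Ideal.Quotient.mk I (C ((c' : ZMod k) * (u : ZMod k))) * pT k := by
          rw [C_mul, map_mul, ← halg, ← halg]; ring
  -- extract divisibility by (X - 1)
  rw [Ideal.mem_span_singleton] at hmem
  obtain ⟨q, hq⟩ := hmem
  rw [hgeom, ← hfrob] at hq
  have hdvd : f * C (c : ZMod k) - C ((c' : ZMod k) * (u : ZMod k))
      = ((X : Polynomial (ZMod k)) - 1) * q := by
    apply mul_right_cancel₀ (pow_ne_zero (k - 1) hXne)
    rw [hq]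
    have : ((X : Polynomial (ZMod k)) - 1) ^ k
        = ((X : Polynomial (ZMod k)) - 1) ^ (k - 1) * ((X : Polynomial (ZMod k)) - 1) := by
      rw [← pow_succ, Nat.sub_add_cancel hk1]
    rw [this]; ring
  -- nilpotency of X - 1 in the quotient
  have hnil : IsNilpotent (Ideal.Quotient.mk I (((X : Polynomial (ZMod k)) - 1) * q)) := by
    refine ⟨k, ?_⟩
    rw [← map_pow, mul_pow, hfrob, ← Ideal.Quotient.eq_zero_iff_mem.mpr
      (Ideal.mem_span_singleton_self _), map_mul]
    simp [Ideal.Quotient.eq_zero_iff_mem.mpr (Ideal.mem_span_singleton_self _)]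
    have h0 : (Ideal.Quotient.mk I X) ^ k - 1 = 0 := by
      rw [← map_pow, ← map_one (Ideal.Quotient.mk I), ← map_sub]
      exact Ideal.Quotient.eq_zero_iff_mem.mpr (Ideal.mem_span_singleton_self _)
    rw [h0, zero_mul]
  -- the constant term is a unit
  have hunit : IsUnit (Ideal.Quotient.mk I (C ((c' : ZMod k) * (u : ZMod k)))) := by
    rw [← halg]
    exact (c' * u).isUnit.map (algebraMap (ZMod k) (GroupRingR k))
  have : IsUnit (Ideal.Quotient.mk I f * Ideal.Quotient.mk I (C (c : ZMod k))) := by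
    have heq : Ideal.Quotient.mk I f * Ideal.Quotient.mk I (C (c : ZMod k))
        = Ideal.Quotient.mk I (C ((c' : ZMod k) * (u : ZMod k)))
          + Ideal.Quotient.mk I (((X : Polynomial (ZMod k)) - 1) * q) := by
      rw [← map_mul, ← map_add, ← hdvd]; ring_nf
    rw [heq]
    exact hnil.isUnit_add_left_of_commute hunit (Commute.all _ _)
  exact isUnit_of_mul_isUnit_left this
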